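/- Let n ≥ 1, let A = (a_{ij}) be a real n×n matrix satisfying the cyclic non-increasing condition, let λ ∈ ℝ, let C be a closed strongly connected component of the graph 𝒢(A), and suppose the vector x ∈ ℝⁿ satisfies x_i = 0 for all i ∉ C and Σ_{i∈C} a_{ij} x_i = λ for every j ∈ C. Then Aᵀx = λe. -/

import Mathlib

open Matrix BigOperators

/-- The cyclic non-increasing condition: each row of `A` weakly decreases
cyclically starting from the diagonal, i.e. `a_{i[j-1]} ≥ a_{ij}` for all
`j ≠ i` (indices in `Fin n`, arithmetic mod `n`). -/
def CyclicNonIncr {n : ℕ} [NeZero n] (A : Matrix (Fin n) (Fin n) ℝ) : Prop :=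
  ∀ i j : Fin n, j ≠ i → A i (j - 1) ≥ A i j

/-- The directed graph `𝒢(A)` has an edge from `i` to `j` iff `a_{i[j-1]} > a_{ij}`. -/
def GraphEdge {n : ℕ} [NeZero n] (A : Matrix (Fin n) (Fin n) ℝ) (i j : Fin n) : Prop :=
  A i (j - 1) > A i j

/-- `i` and `j` are strongly connected in `𝒢(A)`: there are directed paths
(possibly of length 0) from `i` to `j` and from `j` to `i`. -/
def Conn {n : ℕ} [NeZero n] (A : Matrix (Fin n) (Fin n) ℝ) (i j : Fin n) : Prop :=
  Relation.ReflTransGen (GraphEdge A) i j ∧ Relation.ReflTransGen (GraphEdge A) j i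

/-- `C` is a strongly connected component of `𝒢(A)`: an equivalence class of
the strong-connectivity relation. -/
def IsSCC {n : ℕ} [NeZero n] (A : Matrix (Fin n) (Fin n) ℝ) (C : Set (Fin n)) : Prop :=
  ∃ i, C = {j | Conn A i j}

/-- `C` is a closed SCC of `𝒢(A)`: an SCC with no edge leaving it. -/
def IsClosedSCC {n : ℕ} [NeZero n] (A : Matrix (Fin n) (Fin n) ℝ) (C : Set (Fin n)) : Prop :=
  IsSCC A C ∧ ∀ i ∈ C, ∀ j, GraphEdge A i j → j ∈ C

/-- `C` is an open SCC of `𝒢(A)`: an SCC with some edge leaving it. -/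
def IsOpenSCC {n : ℕ} [NeZero n] (A : Matrix (Fin n) (Fin n) ℝ) (C : Set (Fin n)) : Prop :=
  IsSCC A C ∧ ¬ (∀ i ∈ C, ∀ j, GraphEdge A i j → j ∈ C)

open Fin.NatCast Fin.CommRing

theorem stmt_3 (n : ℕ) [NeZero n] (hn : 1 ≤ n) (A : Matrix (Fin n) (Fin n) ℝ)
    (hA : CyclicNonIncr A) (lam : ℝ)
    (C : Finset (Fin n)) (hC : IsClosedSCC A (↑C : Set (Fin n)))
    (x : Fin n → ℝ) (hx0 : ∀ i, i ∉ C → x i = 0)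
    (hxC : ∀ j ∈ C, ∑ i ∈ C, A i j * x i = lam) :
    Aᵀ.mulVec x = fun _ => lam := by
  obtain ⟨⟨i0, hi0⟩, hclosed⟩ := hC
  have hi0C : i0 ∈ C := by
    have : i0 ∈ (↑C : Set (Fin n)) := by
      rw [hi0]; exact ⟨Relation.ReflTransGen.refl, Relation.ReflTransGen.refl⟩
    exact_mod_cast this
  -- step lemma: for j ∉ C and i ∈ C, A i j = A i (j - 1)
  have hstep : ∀ j, j ∉ C → ∀ i ∈ C, A i j = A i (j - 1) := by
    intro j hj i hi
    have hji : j ≠ i := fun h => hj (h ▸ hi)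
    have h1 : A i (j - 1) ≥ A i j := hA i j hji
    have h2 : ¬ GraphEdge A i j := fun he => hj (by
      have := hclosed i (by exact_mod_cast hi) j he
      exact_mod_cast this)
    exact le_antisymm h1 (not_lt.mp h2)
  -- main claim by induction on offset from i0
  have claim : ∀ k : ℕ, ∑ i ∈ C, A i (i0 + (k : Fin n)) * x i = lam := by
    intro k
    induction k with
    | zero => simpa using hxC i0 hi0C
    | succ k ih =>
      set j : Fin n := i0 + ((k : ℕ) + 1 : ℕ) with hjdef
      by_cases hj : j ∈ C
      · exact hxC j hj
      · have hjm : j - 1 = i0 + (k : Fin n) := by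
          rw [hjdef]; push_cast; ring
        calc ∑ i ∈ C, A i j * x i = ∑ i ∈ C, A i (j - 1) * x i := by
              apply Finset.sum_congr rfl
              intro i hi; rw [hstep j hj i hi]
          _ = lam := by rw [hjm]; exact ih
  funext j
  have hj : j = i0 + ((j - i0).val : Fin n) := by
    rw [Fin.cast_val_eq_self]; ring
  have := claim (j - i0).val
  rw [← hj] at this
  rw [Matrix.mulVec]
  simp only [Matrix.transpose_apply, dotProduct]
  rw [← this]
  symm
  apply Finset.sum_subset (Finset.subset_univ C)
  intro i _ hi
  rw [hx0 i hi, mul_zero]
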